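/- Let G be bipartite with parts V_B and V_S, and let α^top be the message vector with α^top_{i→j'} = W and α^top_{j'→i} = 0 for all edges (i,j'), i ∈ V_B, j' ∈ V_S. Then the natural dynamics started from α^top converges to a fixed point α^{*,up}, and this fixed point is maximal in the bipartite partial ordering: α^{*,up} ⪰ α* for every fixed point α* ∈ [0,W]^{2|E|} of the natural dynamics. -/

import Mathlib

open Finset Filter Topology

/-- The offer `m_{i→j}` computed from message vector `α`:
`m_{i→j} = (w_{ij} − α_{i→j})₊ − (1/2)(w_{ij} − α_{i→j} − α_{j→i})₊`. -/
noncomputable def offer {V : Type*} (w α : V → V → ℝ) (i j : V) : ℝ :=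
  max (w i j - α i j) 0 - (1 / 2) * max (w i j - α i j - α j i) 0

/-- `max_{k ∈ ∂i ∖ {j}} m_{k→i}` (max over the empty set is 0). -/
noncomputable def bestAlt {V : Type*} [Fintype V] [DecidableEq V]
    (Adj : V → V → Prop) [DecidableRel Adj] (w α : V → V → ℝ) (i j : V) : ℝ :=
  (Finset.univ.filter fun k => Adj i k ∧ k ≠ j).fold max 0 fun k => offer w α k i

/-- Earnings `γ_i = max_{k ∈ ∂i} m_{k→i}` (max over the empty set is 0). -/
noncomputable def earn {V : Type*} [Fintype V]
    (Adj : V → V → Prop) [DecidableRel Adj] (w α : V → V → ℝ) (i : V) : ℝ :=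
  (Finset.univ.filter fun k => Adj i k).fold max 0 fun k => offer w α k i

/-- One step of the natural dynamics with damping factor `κ`:
`α'_{i→j} = κ · max_{k∈∂i∖{j}} m_{k→i} + (1−κ) · α_{i→j}`. -/
noncomputable def step {V : Type*} [Fintype V] [DecidableEq V]
    (Adj : V → V → Prop) [DecidableRel Adj] (w : V → V → ℝ) (κ : ℝ)
    (α : V → V → ℝ) : V → V → ℝ :=
  fun i j => κ * bestAlt Adj w α i j + (1 - κ) * α i j

/-- A fixed point of the natural dynamics: the message vector is unchanged by the update. -/
def IsFixedPoint {V : Type*} [Fintype V] [DecidableEq V]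
    (Adj : V → V → Prop) [DecidableRel Adj] (w : V → V → ℝ) (κ : ℝ)
    (α : V → V → ℝ) : Prop :=
  ∀ i j, Adj i j → step Adj w κ α i j = α i j

/-- `W`, the maximum edge weight. -/
noncomputable def maxW {V : Type*} [Fintype V]
    (Adj : V → V → Prop) [DecidableRel Adj] (w : V → V → ℝ) : ℝ :=
  ((Finset.univ ×ˢ Finset.univ).filter fun p : V × V => Adj p.1 p.2).fold max 0
    fun p => w p.1 p.2

/-- A valid message vector: `α ∈ [0, W]^{2|E|}`. -/
def ValidMsg {V : Type*} [Fintype V]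
    (Adj : V → V → Prop) [DecidableRel Adj] (w : V → V → ℝ) (α : V → V → ℝ) : Prop :=
  ∀ i j, Adj i j → α i j ∈ Set.Icc (0 : ℝ) (maxW Adj w)

/-- `G = (V, E)` is a finite simple graph with symmetric positive edge weights. -/
def GoodGraph {V : Type*} (Adj : V → V → Prop) (w : V → V → ℝ) : Prop :=
  (∀ i j, Adj i j → Adj j i) ∧ (∀ i, ¬Adj i i) ∧ (∀ i j, w i j = w j i) ∧
  (∀ i j, Adj i j → 0 < w i j)

/-- `G` is bipartite with buyers `isB` and sellers the complement: every edge joins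
a buyer and a seller. -/
def Bipartite {V : Type*} (Adj : V → V → Prop) (isB : V → Prop) : Prop :=
  ∀ i j, Adj i j → (isB i ↔ ¬isB j)

/-- The bipartite partial ordering `α ⪰ β`: for every edge `(i, j')` with `i` a buyer
and `j'` a seller, `α_{i→j'} ≥ β_{i→j'}` and `α_{j'→i} ≤ β_{j'→i}`. -/
def DomGE {V : Type*} (Adj : V → V → Prop) (isB : V → Prop) (α β : V → V → ℝ) : Prop :=
  ∀ i j, Adj i j → isB i → ¬isB j → β i j ≤ α i j ∧ α j i ≤ β j i

/-- Key monotonicity of the offer formula. -/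
lemma offer_le' (w a a' b b' : ℝ) (ha : a ≤ a') (hb : b' ≤ b) (hb' : 0 ≤ b') :
    max (w - a') 0 - (1 / 2) * max (w - a' - b') 0 ≤
      max (w - a) 0 - (1 / 2) * max (w - a - b) 0 := by
  rcases max_cases (w - a) 0 with ⟨e1, h1⟩ | ⟨e1, h1⟩ <;>
  rcases max_cases (w - a') 0 with ⟨e2, h2⟩ | ⟨e2, h2⟩ <;>
  rcases max_cases (w - a - b) 0 with ⟨e3, h3⟩ | ⟨e3, h3⟩ <;>
  rcases max_cases (w - a' - b') 0 with ⟨e4, h4⟩ | ⟨e4, h4⟩ <;>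
  rw [e1, e2, e3, e4] <;> linarith

lemma offer_mono {V : Type*} (w α β : V → V → ℝ) (k i : V)
    (h1 : α k i ≤ β k i) (h2 : β i k ≤ α i k) (h3 : 0 ≤ β i k) :
    offer w β k i ≤ offer w α k i := by
  unfold offer
  exact offer_le' (w k i) (α k i) (β k i) (α i k) (β i k) h1 h2 h3

lemma offer_nonneg' {V : Type*} (w α : V → V → ℝ) (k i : V) (hb : 0 ≤ α i k) :
    0 ≤ offer w α k i := by
  unfold offer
  have h1 : max (w k i - α k i - α i k) 0 ≤ max (w k i - α k i) 0 :=
    max_le_max (by linarith) le_rfl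
  have h2 : (0 : ℝ) ≤ max (w k i - α k i - α i k) 0 := le_max_right _ _
  linarith

lemma offer_le_W' {V : Type*} (w α : V → V → ℝ) (k i : V) (Wv : ℝ)
    (ha : 0 ≤ α k i) (hw : w k i ≤ Wv) (hW : 0 ≤ Wv) :
    offer w α k i ≤ Wv := by
  unfold offer
  have h1 : max (w k i - α k i) 0 ≤ Wv := max_le (by linarith) hW
  have h2 : (0 : ℝ) ≤ max (w k i - α k i - α i k) 0 := le_max_right _ _
  linarith

lemma fold_max_nonneg' {ι : Type*} (s : Finset ι) (f : ι → ℝ) :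
    (0 : ℝ) ≤ s.fold max 0 f :=
  (Finset.le_fold_max _).2 (Or.inl le_rfl)

lemma fold_max_mono' {ι : Type*} (s : Finset ι) (f g : ι → ℝ)
    (h : ∀ x ∈ s, f x ≤ g x) : s.fold max 0 f ≤ s.fold max 0 g :=
  (Finset.fold_max_le _).2 ⟨fold_max_nonneg' s g,
    fun x hx => (h x hx).trans ((Finset.le_fold_max _).2 (Or.inr ⟨x, hx, le_rfl⟩))⟩

lemma fold_max_tendsto' {ι : Type*} (s : Finset ι) (F : ℕ → ι → ℝ) (L : ι → ℝ)
    (h : ∀ k ∈ s, Filter.Tendsto (fun t => F t k) Filter.atTop (nhds (L k))) :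
    Filter.Tendsto (fun t => s.fold max 0 (F t)) Filter.atTop (nhds (s.fold max 0 L)) := by
  classical
  induction s using Finset.induction_on with
  | empty => simp only [Finset.fold_empty]; exact tendsto_const_nhds
  | insert _ _ hnot ih =>
    simp only [Finset.fold_insert hnot]
    exact (h _ (Finset.mem_insert_self _ _)).max
      (ih fun k hk => h k (Finset.mem_insert_of_mem hk))

/-- Auxiliary ordering: `α` above `β` in the bipartite order, recorded per directed edge. -/
def DomAll {V : Type*} (Adj : V → V → Prop) (isB : V → Prop) (α β : V → V → ℝ) : Prop :=
  ∀ i j, Adj i j → (isB i → β i j ≤ α i j) ∧ (¬isB i → α i j ≤ β i j)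

/-- On a bipartite graph, the natural dynamics started from `α^top`
(`α^top_{i→j'} = W` for buyers `i`, `α^top_{j'→i} = 0` for sellers `j'`) converges
to a fixed point `α^{*,up}` that dominates every fixed point in `[0,W]^{2|E|}`
in the bipartite partial ordering. -/
theorem stmt6 {V : Type*} [Fintype V] [DecidableEq V]
    (Adj : V → V → Prop) [DecidableRel Adj] (w : V → V → ℝ)
    (hG : GoodGraph Adj w) (isB : V → Prop) [DecidablePred isB]
    (hbip : Bipartite Adj isB)
    (κ : ℝ) (hκ : κ ∈ Set.Ioo (0 : ℝ) 1) :
    ∃ αup : V → V → ℝ, IsFixedPoint Adj w κ αup ∧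
      (∀ i j, Adj i j →
        Filter.Tendsto
          (fun t : ℕ =>
            (step Adj w κ)^[t] (fun a _ => if isB a then maxW Adj w else 0) i j)
          Filter.atTop (nhds (αup i j))) ∧
      (∀ αstar : V → V → ℝ, ValidMsg Adj w αstar → IsFixedPoint Adj w κ αstar →
        DomGE Adj isB αup αstar) := by
  obtain ⟨hsymm, hirr, hwsymm, hwpos⟩ := hG
  obtain ⟨hκ0, hκ1⟩ := hκ
  set Wv := maxW Adj w with hWv
  have hW0 : 0 ≤ Wv := (Finset.le_fold_max _).2 (Or.inl le_rfl)
  have hwle : ∀ i j, Adj i j → w i j ≤ Wv := fun i j h =>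
    (Finset.le_fold_max _).2 (Or.inr ⟨(i, j), by simp [h], le_rfl⟩)
  set α0 : V → V → ℝ := fun a _ => if isB a then Wv else 0 with hα0
  set A : ℕ → V → V → ℝ := fun t => (step Adj w κ)^[t] α0 with hA
  have hA0 : A 0 = α0 := rfl
  have hAsucc : ∀ t, A (t + 1) = step Adj w κ (A t) := fun t =>
    Function.iterate_succ_apply' _ _ _
  -- bounds on bestAlt
  have bestAlt_nonneg : ∀ (α : V → V → ℝ) (i j : V), 0 ≤ bestAlt Adj w α i j :=
    fun α i j => (Finset.le_fold_max _).2 (Or.inl le_rfl)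
  have bestAlt_le : ∀ α, ValidMsg Adj w α → ∀ i j, bestAlt Adj w α i j ≤ Wv := by
    intro α hα i j
    refine (Finset.fold_max_le _).2 ⟨hW0, ?_⟩
    intro k hk
    simp only [Finset.mem_filter, Finset.mem_univ, true_and] at hk
    have hki : Adj k i := hsymm i k hk.1
    exact offer_le_W' w α k i Wv (hα k i hki).1 (hwle k i hki) hW0
  -- step preserves validity
  have step_valid : ∀ α, ValidMsg Adj w α → ValidMsg Adj w (step Adj w κ α) := by
    intro α hα i j hij
    have h1 := bestAlt_nonneg α i j
    have h2 := bestAlt_le α hα i j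
    have h3 := hα i j hij
    simp only [Set.mem_Icc] at h3 ⊢
    simp only [step]
    constructor
    · have e1 := mul_nonneg hκ0.le h1
      have e2 := mul_nonneg (by linarith : (0:ℝ) ≤ 1 - κ) h3.1
      linarith
    · have e1 : κ * bestAlt Adj w α i j ≤ κ * Wv :=
        mul_le_mul_of_nonneg_left h2 hκ0.le
      have e2 : (1 - κ) * α i j ≤ (1 - κ) * Wv :=
        mul_le_mul_of_nonneg_left h3.2 (by linarith)
      nlinarith
  -- step preserves the bipartite ordering
  have step_dom : ∀ α β, DomAll Adj isB α β → ValidMsg Adj w α → ValidMsg Adj w β →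
      DomAll Adj isB (step Adj w κ α) (step Adj w κ β) := by
    intro α β hd hα hβ i j hij
    constructor
    · intro hBi
      have hb : bestAlt Adj w β i j ≤ bestAlt Adj w α i j := by
        simp only [bestAlt]
        apply fold_max_mono'
        intro k hk
        simp only [Finset.mem_filter, Finset.mem_univ, true_and] at hk
        have hik : Adj i k := hk.1
        have hki : Adj k i := hsymm i k hik
        have hBk : ¬isB k := (hbip i k hik).1 hBi
        exact offer_mono w α β k i ((hd k i hki).2 hBk) ((hd i k hik).1 hBi)
          (hβ i k hik).1
      have hc : β i j ≤ α i j := (hd i j hij).1 hBi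
      simp only [step]
      have e1 := mul_le_mul_of_nonneg_left hb hκ0.le
      have e2 := mul_le_mul_of_nonneg_left hc (by linarith : (0:ℝ) ≤ 1 - κ)
      linarith
    · intro hBi
      have hb : bestAlt Adj w α i j ≤ bestAlt Adj w β i j := by
        simp only [bestAlt]
        apply fold_max_mono'
        intro k hk
        simp only [Finset.mem_filter, Finset.mem_univ, true_and] at hk
        have hik : Adj i k := hk.1
        have hki : Adj k i := hsymm i k hik
        have hBk : isB k := by
          by_contra hk'
          exact hBi ((hbip i k hik).2 hk')
        exact offer_mono w β α k i ((hd k i hki).1 hBk) ((hd i k hik).2 hBi)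
          (hα i k hik).1
      have hc : α i j ≤ β i j := (hd i j hij).2 hBi
      simp only [step]
      have e1 := mul_le_mul_of_nonneg_left hb hκ0.le
      have e2 := mul_le_mul_of_nonneg_left hc (by linarith : (0:ℝ) ≤ 1 - κ)
      linarith
  -- the iterates stay valid
  have hvalid : ∀ t, ValidMsg Adj w (A t) := by
    intro t
    induction t with
    | zero =>
      intro i j hij
      show (if isB i then Wv else 0) ∈ Set.Icc (0:ℝ) Wv
      simp only [Set.mem_Icc]
      split_ifs
      exacts [⟨hW0, le_rfl⟩, ⟨le_rfl, hW0⟩]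
    | succ t ih =>
      rw [hAsucc]
      exact step_valid _ ih
  have hA0B : ∀ i j, isB i → A 0 i j = Wv := by
    intro i j h
    show (if isB i then Wv else 0) = Wv
    simp [h]
  have hA0S : ∀ i j, ¬isB i → A 0 i j = 0 := by
    intro i j h
    show (if isB i then Wv else 0) = 0
    simp [h]
  -- successive iterates are ordered
  have hdom1 : ∀ t, DomAll Adj isB (A t) (A (t + 1)) := by
    intro t
    induction t with
    | zero =>
      intro i j hij
      constructor
      · intro hBi
        rw [hA0B i j hBi]
        exact (hvalid 1 i j hij).2
      · intro hBi
        rw [hA0S i j hBi]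
        exact (hvalid 1 i j hij).1
    | succ t ih =>
      have h2 := step_dom _ _ ih (hvalid t) (hvalid (t + 1))
      simp only [← hAsucc] at h2
      exact h2
  have hanti : ∀ i j, Adj i j → isB i → Antitone fun t => A t i j :=
    fun i j hij hBi => antitone_nat_of_succ_le fun t => (hdom1 t i j hij).1 hBi
  have hmono : ∀ i j, Adj i j → ¬isB i → Monotone fun t => A t i j :=
    fun i j hij hBi => monotone_nat_of_le_succ fun t => (hdom1 t i j hij).2 hBi
  -- the limit
  set αup : V → V → ℝ := fun i j => if isB i then ⨅ t, A t i j else ⨆ t, A t i j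
    with hαup
  have hαupB : ∀ i j, isB i → αup i j = ⨅ t, A t i j := by
    intro i j h; rw [hαup]; simp [h]
  have hαupS : ∀ i j, ¬isB i → αup i j = ⨆ t, A t i j := by
    intro i j h; rw [hαup]; simp [h]
  have htend : ∀ i j, Adj i j →
      Filter.Tendsto (fun t => A t i j) Filter.atTop (nhds (αup i j)) := by
    intro i j hij
    by_cases hBi : isB i
    · rw [hαupB i j hBi]
      refine tendsto_atTop_ciInf (hanti i j hij hBi) ⟨0, ?_⟩
      rintro x ⟨t, rfl⟩
      exact (hvalid t i j hij).1
    · rw [hαupS i j hBi]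
      refine tendsto_atTop_ciSup (hmono i j hij hBi) ⟨Wv, ?_⟩
      rintro x ⟨t, rfl⟩
      exact (hvalid t i j hij).2
  -- the limit is a fixed point
  have hfix : IsFixedPoint Adj w κ αup := by
    intro i j hij
    have hb : Filter.Tendsto (fun t => bestAlt Adj w (A t) i j) Filter.atTop
        (nhds (bestAlt Adj w αup i j)) := by
      simp only [bestAlt]
      apply fold_max_tendsto'
      intro k hk
      simp only [Finset.mem_filter, Finset.mem_univ, true_and] at hk
      have hik : Adj i k := hk.1
      have hki : Adj k i := hsymm i k hik
      have t1 := htend k i hki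
      have t2 := htend i k hik
      simp only [offer]
      have m1 : Filter.Tendsto (fun t => max (w k i - A t k i) 0) Filter.atTop
          (nhds (max (w k i - αup k i) 0)) :=
        (tendsto_const_nhds.sub t1).max tendsto_const_nhds
      have m2 : Filter.Tendsto (fun t => max (w k i - A t k i - A t i k) 0)
          Filter.atTop (nhds (max (w k i - αup k i - αup i k) 0)) :=
        ((tendsto_const_nhds.sub t1).sub t2).max tendsto_const_nhds
      exact m1.sub (m2.const_mul (1 / 2))
    have h1 : Filter.Tendsto (fun t => A (t + 1) i j) Filter.atTop (nhds (αup i j)) :=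
      (htend i j hij).comp (tendsto_add_atTop_nat 1)
    have h2 : Filter.Tendsto (fun t => A (t + 1) i j) Filter.atTop
        (nhds (step Adj w κ αup i j)) := by
      simp only [hAsucc, step]
      exact (hb.const_mul κ).add ((htend i j hij).const_mul (1 - κ))
    exact tendsto_nhds_unique h2 h1
  -- domination of every valid fixed point
  have hdomstar : ∀ αstar, ValidMsg Adj w αstar → IsFixedPoint Adj w κ αstar →
      ∀ t, DomAll Adj isB (A t) αstar := by
    intro αstar hv hf t
    induction t with
    | zero =>
      intro i j hij
      constructor
      · intro hBi
        rw [hA0B i j hBi]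
        exact (hv i j hij).2
      · intro hBi
        rw [hA0S i j hBi]
        exact (hv i j hij).1
    | succ t ih =>
      have h2 := step_dom _ _ ih (hvalid t) hv
      intro i j hij
      have h3 := h2 i j hij
      rw [hf i j hij, ← hAsucc t] at h3
      exact h3
  refine ⟨αup, hfix, fun i j hij => htend i j hij, ?_⟩
  intro αstar hv hf i j hij hBi hBj
  have hji : Adj j i := hsymm i j hij
  constructor
  · rw [hαupB i j hBi]
    exact le_ciInf fun t => (hdomstar αstar hv hf t i j hij).1 hBi
  · rw [hαupS j i hBj]
    exact ciSup_le fun t => (hdomstar αstar hv hf t j i hji).2 hBj
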